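/- For every infinite cardinal 𝔞 and every non-zero natural number n, (2^{𝒪ₙ(𝔞)})^{ℵ₀} = 2^{ℬₙ(𝔞)}. Concretely: for every infinite set A and every n ≥ 1, the cardinal (2^{|𝒪ₙ(A)|})^{ℵ₀} equals 2^{|ℬₙ(A)|}. -/

import Mathlib

open Set

/-- A finitary partition of the whole type `α`: a family of pairwise disjoint
nonempty finite subsets whose union is everything. -/
def IsFinitaryPartition {α : Type*} (P : Set (Set α)) : Prop :=
  (∀ p ∈ P, p.Finite) ∧ (∀ p ∈ P, p.Nonempty) ∧
    (∀ p ∈ P, ∀ q ∈ P, p ≠ q → Disjoint p q) ∧ ⋃₀ P = Set.univ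

/-- The set of non-singleton blocks of a partition. -/
def nsBlocks {α : Type*} (P : Set (Set α)) : Set (Set α) :=
  {p ∈ P | p.Nontrivial}

/-- `ℬₙ(A)`: finitary partitions with exactly `n` non-singleton blocks. -/
def BPart (α : Type*) (n : ℕ) : Set (Set (Set α)) :=
  {P | IsFinitaryPartition P ∧ (nsBlocks P).Finite ∧ (nsBlocks P).ncard = n}

/-- `ℬ_fin(A)`: finitary partitions with finitely many non-singleton blocks. -/
def BFinPart (α : Type*) : Set (Set (Set α)) :=
  {P | IsFinitaryPartition P ∧ (nsBlocks P).Finite}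

/-- `𝒪ₙ(A)`: ordered `n`-tuples of pairwise disjoint finite subsets of `A`. -/
def OTuple (α : Type*) (n : ℕ) : Set (Fin n → Set α) :=
  {p | (∀ i, (p i).Finite) ∧ ∀ i j, i ≠ j → Disjoint (p i) (p j)}

/-! ### Auxiliary material -/

/-- Complete a family of blocks to a partition by adding singletons. -/
def addSingletons {α : Type*} (Q : Set (Set α)) : Set (Set α) :=
  Q ∪ {s | ∃ x, x ∉ ⋃₀ Q ∧ s = {x}}

lemma nsBlocks_addSingletons {α : Type*} {Q : Set (Set α)}
    (hnt : ∀ p ∈ Q, p.Nontrivial) : nsBlocks (addSingletons Q) = Q := by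
  ext p
  constructor
  · rintro ⟨hp | ⟨x, -, rfl⟩, hnt'⟩
    · exact hp
    · exact absurd hnt' (Set.not_nontrivial_iff.mpr subsingleton_singleton)
  · exact fun hp => ⟨Or.inl hp, hnt p hp⟩

lemma isFP_addSingletons {α : Type*} {Q : Set (Set α)}
    (hfin : ∀ p ∈ Q, p.Finite) (hnt : ∀ p ∈ Q, p.Nontrivial)
    (hdisj : ∀ p ∈ Q, ∀ q ∈ Q, p ≠ q → Disjoint p q) :
    IsFinitaryPartition (addSingletons Q) := by
  refine ⟨?_, ?_, ?_, ?_⟩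
  · rintro p (hp | ⟨x, -, rfl⟩)
    · exact hfin p hp
    · exact finite_singleton x
  · rintro p (hp | ⟨x, -, rfl⟩)
    · exact (hnt p hp).nonempty
    · exact singleton_nonempty x
  · rintro p (hp | ⟨x, hx, rfl⟩) q (hq | ⟨y, hy, rfl⟩) hne
    · exact hdisj p hp q hq hne
    · exact Set.disjoint_singleton_right.mpr fun h => hy ⟨p, hp, h⟩
    · exact Set.disjoint_singleton_left.mpr fun h => hx ⟨q, hq, h⟩
    · exact Set.disjoint_singleton.mpr fun h => hne (by rw [h])
  · ext x
    simp only [mem_univ, iff_true, mem_sUnion]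
    by_cases hx : x ∈ ⋃₀ Q
    · obtain ⟨p, hp, hxp⟩ := hx
      exact ⟨p, Or.inl hp, hxp⟩
    · exact ⟨{x}, Or.inr ⟨x, hx, rfl⟩, rfl⟩

/-- A finitary partition is determined by its non-singleton blocks. -/
lemma partition_eq_addSingletons {α : Type*} {P : Set (Set α)}
    (hP : IsFinitaryPartition P) : P = addSingletons (nsBlocks P) := by
  obtain ⟨-, hne, hdisj, huniv⟩ := hP
  ext p
  constructor
  · intro hp
    by_cases hnt : p.Nontrivial
    · exact Or.inl ⟨hp, hnt⟩
    · obtain ⟨x, hx⟩ := hne p hp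
      have hsing : p = {x} := (Set.not_nontrivial_iff.mp hnt).eq_singleton_of_mem hx
      refine Or.inr ⟨x, ?_, hsing⟩
      rintro ⟨q, ⟨hq, hqnt⟩, hxq⟩
      have hpq : p ≠ q := fun h => hnt (h ▸ hqnt)
      exact (disjoint_left.mp (hdisj p hp q hq hpq) hx hxq).elim
  · rintro (⟨hp, -⟩ | ⟨x, hx, rfl⟩)
    · exact hp
    · have hxU : x ∈ ⋃₀ P := huniv ▸ mem_univ x
      obtain ⟨q, hq, hxq⟩ := hxU
      have hqsub : q.Subsingleton := by
        rw [← Set.not_nontrivial_iff]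
        exact fun hqnt => hx ⟨q, ⟨hq, hqnt⟩, hxq⟩
      rwa [← hqsub.eq_singleton_of_mem hxq]

lemma partition_eq_of_nsBlocks_eq {α : Type*} {P P' : Set (Set α)}
    (hP : IsFinitaryPartition P) (hP' : IsFinitaryPartition P')
    (h : nsBlocks P = nsBlocks P') : P = P' := by
  rw [partition_eq_addSingletons hP, partition_eq_addSingletons hP', h]

/-- Upper bound: `|ℬₙ(α)| ≤ |α|`. -/
lemma mk_BPart_le {α : Type*} [Infinite α] (n : ℕ) :
    Cardinal.mk ↥(BPart α n) ≤ Cardinal.mk α := by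
  classical
  have key : Cardinal.mk ↥(BPart α n) ≤ Cardinal.mk (Finset (Finset α)) := by
    let e : Set α → Finset α := fun s => if h : s.Finite then h.toFinset else ∅
    have he : ∀ {s t : Set α}, s.Finite → t.Finite → e s = e t → s = t := by
      intro s t hs ht hst
      simp only [e, dif_pos hs, dif_pos ht] at hst
      exact Set.Finite.toFinset_inj.mp hst
    refine ⟨⟨fun P => P.2.2.1.toFinset.image e, ?_⟩⟩
    rintro ⟨P, hP⟩ ⟨P', hP'⟩ hPP'
    simp only [Subtype.mk.injEq] at hPP' ⊢
    refine partition_eq_of_nsBlocks_eq hP.1 hP'.1 ?_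
    have hfin : ∀ q ∈ nsBlocks P, q.Finite := fun q hq => hP.1.1 q hq.1
    have hfin' : ∀ q ∈ nsBlocks P', q.Finite := fun q hq => hP'.1.1 q hq.1
    ext q
    constructor
    · intro hq
      have hmem : e q ∈ hP.2.1.toFinset.image e :=
        Finset.mem_image.mpr ⟨q, hP.2.1.mem_toFinset.mpr hq, rfl⟩
      rw [hPP'] at hmem
      obtain ⟨q', hq', heq⟩ := Finset.mem_image.mp hmem
      rw [hP'.2.1.mem_toFinset] at hq'
      rwa [← he (hfin' q' hq') (hfin q hq) heq]
    · intro hq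
      have hmem : e q ∈ hP'.2.1.toFinset.image e :=
        Finset.mem_image.mpr ⟨q, hP'.2.1.mem_toFinset.mpr hq, rfl⟩
      rw [← hPP'] at hmem
      obtain ⟨q', hq', heq⟩ := Finset.mem_image.mp hmem
      rw [hP.2.1.mem_toFinset] at hq'
      rwa [← he (hfin q' hq') (hfin' q hq) heq]
  calc Cardinal.mk ↥(BPart α n) ≤ Cardinal.mk (Finset (Finset α)) := key
    _ = Cardinal.mk (Finset α) := Cardinal.mk_finset_of_infinite _
    _ = Cardinal.mk α := Cardinal.mk_finset_of_infinite _

/-- Lower bound: `|α| ≤ |ℬₙ(α)|` for `n ≥ 1`. -/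
lemma le_mk_BPart {α : Type*} [Infinite α] (n : ℕ) (hn : 1 ≤ n) :
    Cardinal.mk α ≤ Cardinal.mk ↥(BPart α n) := by
  classical
  obtain ⟨f, hf⟩ : ∃ f : ℕ → α, Function.Injective f :=
    ⟨(Infinite.natEmbedding α : ℕ ↪ α), (Infinite.natEmbedding α).injective⟩
  set S : Set α := f '' {k | k < 2 * n} with hS
  have hSfin : S.Finite := (Set.finite_Iio (2 * n)).image f
  have hcompl : Cardinal.mk ↥Sᶜ = Cardinal.mk α :=
    Cardinal.mk_compl_of_infinite S (hSfin.lt_aleph0.trans_le (Cardinal.aleph0_le_mk α))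
  rw [← hcompl]
  let b : α → ℕ → α := fun a k => if k = 1 then a else f k
  have hb : ∀ a ∉ S, ∀ k < 2 * n, ∀ l < 2 * n, b a k = b a l → k = l := by
    intro a ha k hk l hl h
    by_cases hk1 : k = 1 <;> by_cases hl1 : l = 1
    · omega
    · simp only [b, if_pos hk1, if_neg hl1] at h
      exact absurd ⟨l, hl, h.symm⟩ ha
    · simp only [b, if_neg hk1, if_pos hl1] at h
      exact absurd ⟨k, hk, h⟩ ha
    · simp only [b, if_neg hk1, if_neg hl1] at h
      exact hf h
  let g : α → Fin n → Set α := fun a i => {b a (2 * i.val), b a (2 * i.val + 1)}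
  have hgnt : ∀ a ∉ S, ∀ i : Fin n, (g a i).Nontrivial := by
    intro a ha i
    have hi := i.isLt
    refine ⟨b a (2 * i.val), by simp [g], b a (2 * i.val + 1), by simp [g], fun h => ?_⟩
    have := hb a ha _ (by omega) _ (by omega) h
    omega
  have hgdisj : ∀ a ∉ S, ∀ i j : Fin n, i ≠ j → Disjoint (g a i) (g a j) := by
    intro a ha i j hij
    have hi := i.isLt
    have hj := j.isLt
    rw [Set.disjoint_iff_forall_ne]
    rintro x (rfl | rfl) y (rfl | rfl) h <;>
    · have := hb a ha _ (by omega) _ (by omega) h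
      exact hij (Fin.ext (by omega))
  have hgfin : ∀ a, ∀ i : Fin n, (g a i).Finite := fun a i =>
    (finite_singleton _).insert _
  have hginj : ∀ a ∉ S, Function.Injective (g a) := by
    intro a ha i j h
    by_contra hij
    have hd := hgdisj a ha i j hij
    rw [h] at hd
    obtain ⟨x, hx⟩ := (hgnt a ha j).nonempty
    exact disjoint_left.mp hd hx hx
  have ha0 : ∀ a : α, b a 0 = f 0 := fun a => if_neg (by norm_num)
  have ha1 : ∀ a : α, b a 1 = a := fun a => if_pos rfl
  refine ⟨⟨fun a => ⟨addSingletons (Set.range (g a.1)), ?_⟩, ?_⟩⟩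
  · obtain ⟨a, ha⟩ := a
    have ha' : a ∉ S := ha
    have hrange : ∀ p ∈ Set.range (g a), p.Nontrivial := by
      rintro p ⟨i, rfl⟩; exact hgnt a ha' i
    have hrfin : ∀ p ∈ Set.range (g a), p.Finite := by
      rintro p ⟨i, rfl⟩; exact hgfin a i
    have hrdisj : ∀ p ∈ Set.range (g a), ∀ q ∈ Set.range (g a), p ≠ q → Disjoint p q := by
      rintro p ⟨i, rfl⟩ q ⟨j, rfl⟩ hne
      exact hgdisj a ha' i j fun h => hne (by rw [h])
    refine ⟨isFP_addSingletons hrfin hrange hrdisj, ?_, ?_⟩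
    · rw [nsBlocks_addSingletons hrange]
      exact Set.finite_range _
    · rw [nsBlocks_addSingletons hrange, ← Set.image_univ,
        Set.ncard_image_of_injective _ (hginj a ha'), Set.ncard_univ,
        Nat.card_eq_fintype_card, Fintype.card_fin]
  · rintro ⟨a, ha⟩ ⟨a', ha'⟩ h
    simp only [Subtype.mk.injEq] at h ⊢
    have ha2 : a ∉ S := ha
    have ha2' : a' ∉ S := ha'
    have hrange : ∀ p ∈ Set.range (g a), p.Nontrivial := by
      rintro p ⟨i, rfl⟩; exact hgnt a ha2 i
    have hrange' : ∀ p ∈ Set.range (g a'), p.Nontrivial := by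
      rintro p ⟨i, rfl⟩; exact hgnt a' ha2' i
    have heq : Set.range (g a) = Set.range (g a') := by
      rw [← nsBlocks_addSingletons hrange, ← nsBlocks_addSingletons hrange', h]
    set i0 : Fin n := ⟨0, hn⟩ with hi0
    have hmem : g a i0 ∈ Set.range (g a') := by
      rw [← heq]; exact Set.mem_range_self i0
    obtain ⟨j, hj⟩ := hmem
    have hj0 : j = i0 := by
      have hf0 : f 0 ∈ g a' j := by
        rw [hj]
        simp only [g, hi0, mem_insert_iff, mem_singleton_iff]
        left
        simp [ha0]
      have hjlt := j.isLt
      rcases hf0 with h0 | h0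
      · have := hb a' ha2' (2 * j.val) (by omega) 0 (by omega) (by rw [ha0]; exact h0.symm)
        exact Fin.ext (by simp only [hi0]; omega)
      · rw [mem_singleton_iff] at h0
        have := hb a' ha2' (2 * j.val + 1) (by omega) 0 (by omega) (by rw [ha0]; exact h0.symm)
        omega
    rw [hj0] at hj
    have hga : g a' i0 = g a i0 := hj
    simp only [g, hi0] at hga
    norm_num [ha0, ha1] at hga
    have hamem : a ∈ ({f 0, a'} : Set α) := by
      rw [hga]; exact Or.inr rfl
    rcases hamem with h0 | h0
    · exact absurd (h0 ▸ ⟨0, by simp; omega, rfl⟩) ha2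
    · exact h0

/-- Upper bound: `|𝒪ₙ(α)| ≤ |α|`. -/
lemma mk_OTuple_le {α : Type*} [Infinite α] (n : ℕ) (hn : 1 ≤ n) :
    Cardinal.mk ↥(OTuple α n) ≤ Cardinal.mk α := by
  classical
  have key : Cardinal.mk ↥(OTuple α n) ≤ Cardinal.mk (Fin n → Finset α) := by
    refine ⟨⟨fun p => fun i => (p.2.1 i).toFinset, ?_⟩⟩
    rintro ⟨p, hp⟩ ⟨q, hq⟩ hpq
    simp only [Subtype.mk.injEq] at hpq ⊢
    funext i
    exact Set.Finite.toFinset_inj.mp (congrFun hpq i)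
  refine key.trans ?_
  have harrow : Cardinal.mk (Fin n → Finset α) = Cardinal.mk (Finset α) ^ (n : Cardinal) := by
    rw [Cardinal.mk_arrow]
    simp
  rw [harrow, Cardinal.mk_finset_of_infinite]
  rw [show ((n : Cardinal) = ((n : ℕ) : Cardinal)) from rfl, Cardinal.power_natCast]
  exact le_of_eq (Cardinal.power_nat_eq (Cardinal.aleph0_le_mk α) hn)

/-- Lower bound: `|α| ≤ |𝒪ₙ(α)|` for `n ≥ 1`. -/
lemma le_mk_OTuple {α : Type*} [Infinite α] (n : ℕ) (hn : 1 ≤ n) :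
    Cardinal.mk α ≤ Cardinal.mk ↥(OTuple α n) := by
  classical
  refine ⟨⟨fun a => ⟨fun i => if i.val = 0 then {a} else ∅, ?_, ?_⟩, ?_⟩⟩
  · intro i
    by_cases hi : (i : ℕ) = 0 <;> simp [hi]
  · intro i j hij
    by_cases hi : i.val = 0 <;> by_cases hj : j.val = 0
    · exact absurd (Fin.ext (by omega)) hij
    · simp [hi, hj]
    · simp [hi, hj]
    · simp [hi, hj]
  · intro a a' haa'
    simp only [Subtype.mk.injEq] at haa'
    have := congrFun (congrArg Subtype.val haa' : (fun i : Fin n => if i.val = 0 then ({a} : Set α) else ∅) = fun i => if i.val = 0 then {a'} else ∅) ⟨0, hn⟩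
    simp only [if_pos rfl] at this
    exact Set.singleton_eq_singleton_iff.mp this

lemma mk_OTuple_eq {α : Type*} [Infinite α] (n : ℕ) (hn : 1 ≤ n) :
    Cardinal.mk ↥(OTuple α n) = Cardinal.mk α :=
  le_antisymm (mk_OTuple_le n hn) (le_mk_OTuple n hn)

lemma mk_BPart_eq {α : Type*} [Infinite α] (n : ℕ) (hn : 1 ≤ n) :
    Cardinal.mk ↥(BPart α n) = Cardinal.mk α :=
  le_antisymm (mk_BPart_le n) (le_mk_BPart n hn)

/-- For every infinite cardinal `𝔞` and every non-zero natural number `n`,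
`(2 ^ 𝒪ₙ(𝔞)) ^ ℵ₀ = 2 ^ ℬₙ(𝔞)`. -/
theorem statement0 {α : Type*} [Infinite α] (n : ℕ) (hn : 1 ≤ n) :
    ((2 : Cardinal) ^ Cardinal.mk ↥(OTuple α n)) ^ Cardinal.aleph0 =
      2 ^ Cardinal.mk ↥(BPart α n) := by
  rw [mk_OTuple_eq n hn, mk_BPart_eq n hn, ← Cardinal.power_mul,
    Cardinal.mul_aleph0_eq (Cardinal.aleph0_le_mk α)]
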